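/- Let G be a finite connected simple graph, q : D(G) → ℍ a map, and U the quaternionic transition matrix determined by q. Write q(e) = q₀(e) + q₁(e)i + q₂(e)j + q₃(e)k with real q₀(e), q₁(e), q₂(e), q₃(e). Then U is quaternionic unitary (U*·U = U·U* = I) if and only if for every arc e ∈ D(G) one has q₀(e)² + q₁(e)² + q₂(e)² + q₃(e)² − 2q₀(e)/d_{o(e)} = 0, and q(e) = q(f) for any two arcs e, f ∈ D(G) with o(e) = o(f). -/

import Mathlib

noncomputable section

variable {V : Type*}

/-- The quaternionic transition matrix determined by `q : D(G) → ℍ`: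
`U e f = q(e)` if `t(f) = o(e)` and `f ≠ e⁻¹`, `U e f = q(e) − 1` if `f = e⁻¹`,
`0` otherwise. -/
def quatTransition [Fintype V] [DecidableEq V] (G : SimpleGraph V) [DecidableRel G.Adj]
    (q : G.Dart → Quaternion ℝ) : Matrix G.Dart G.Dart (Quaternion ℝ) := fun e f =>
  if f = e.symm then q e - 1
  else if f.toProd.2 = e.toProd.1 then q e else 0

namespace QuatTransitionAux

open Finset

set_option linter.unusedSectionVars false

variable [Fintype V] [DecidableEq V] {G : SimpleGraph V} [DecidableRel G.Adj]

lemma qt_eq (q : G.Dart → Quaternion ℝ) (e f : G.Dart) :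
    quatTransition G q e f =
      (if f.toProd.2 = e.toProd.1 then q e else 0) - (if f = e.symm then 1 else 0) := by
  unfold quatTransition
  by_cases h : f = e.symm
  · subst h; simp
  · simp [h]

lemma snd_fiber_card (u : V) :
    #{f : G.Dart | f.toProd.2 = u} = G.degree u := by
  rw [← G.dart_fst_fiber_card_eq_degree u]
  apply Finset.card_nbij' (fun f => f.symm) (fun f => f.symm) <;>
    simp [SimpleGraph.Dart.symm, Set.MapsTo, Set.LeftInvOn, Set.RightInvOn]

lemma fst_fiber_card (u : V) :
    #{f : G.Dart | f.toProd.1 = u} = G.degree u :=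
  G.dart_fst_fiber_card_eq_degree u

lemma symm_eq_symm_iff (e e' : G.Dart) : e.symm = e'.symm ↔ e = e' :=
  SimpleGraph.Dart.symm_involutive.injective.eq_iff

lemma eq_symm_comm (e f : G.Dart) : f = e.symm ↔ e = f.symm := by
  constructor <;> rintro rfl <;> simp

lemma mulStar_apply (q : G.Dart → Quaternion ℝ) (e e' : G.Dart) :
    (quatTransition G q * star (quatTransition G q)) e e' =
      (if e.toProd.1 = e'.toProd.1 then
          (G.degree e.toProd.1 : Quaternion ℝ) * (q e * star (q e')) - q e - star (q e')
        else 0) + (if e = e' then 1 else 0) := by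
  rw [Matrix.mul_apply]
  have hterm : ∀ f : G.Dart,
      quatTransition G q e f * star (quatTransition G q) f e' =
        ((if f.toProd.2 = e.toProd.1 then q e else 0) * (if f.toProd.2 = e'.toProd.1 then star (q e') else 0)
         - (if f = e'.symm then (if f.toProd.2 = e.toProd.1 then q e else 0) else 0))
        - ((if f = e.symm then (if f.toProd.2 = e'.toProd.1 then star (q e') else 0) else 0)
         - (if f = e.symm then (if f = e'.symm then 1 else 0) else 0)) := by
    intro f
    rw [Matrix.star_apply, qt_eq, qt_eq]
    simp only [star_sub, apply_ite star, star_zero, star_one]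
    by_cases h1 : f = e.symm <;> by_cases h2 : f = e'.symm <;>
      by_cases h3 : f.toProd.2 = e.toProd.1 <;> by_cases h4 : f.toProd.2 = e'.toProd.1 <;>
      simp_all <;> noncomm_ring
  rw [Finset.sum_congr rfl fun f _ => hterm f]
  rw [Finset.sum_sub_distrib, Finset.sum_sub_distrib, Finset.sum_sub_distrib]
  have hSA : ∑ f : G.Dart, (if f.toProd.2 = e.toProd.1 then q e else 0) *
      (if f.toProd.2 = e'.toProd.1 then star (q e') else 0) =
      if e.toProd.1 = e'.toProd.1 then
        (G.degree e.toProd.1 : Quaternion ℝ) * (q e * star (q e')) else 0 := by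
    by_cases hP : e.toProd.1 = e'.toProd.1
    · rw [if_pos hP]
      have : ∀ f : G.Dart, (if f.toProd.2 = e.toProd.1 then q e else 0) *
          (if f.toProd.2 = e'.toProd.1 then star (q e') else 0) =
          if f.toProd.2 = e.toProd.1 then q e * star (q e') else 0 := by
        intro f
        by_cases h : f.toProd.2 = e.toProd.1 <;> simp [h, hP ▸ h, ← hP]
      rw [Finset.sum_congr rfl fun f _ => this f, Finset.sum_ite, Finset.sum_const,
        Finset.sum_const_zero, add_zero]
      rw [show (Finset.univ.filter fun f : G.Dart => f.toProd.2 = e.toProd.1) =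
        ({f : G.Dart | f.toProd.2 = e.toProd.1} : Finset _) from rfl, snd_fiber_card]
      rw [nsmul_eq_mul]
    · rw [if_neg hP]
      apply Finset.sum_eq_zero
      intro f _
      by_cases h : f.toProd.2 = e.toProd.1 <;> simp [h]
      intro h'
      exact absurd (h ▸ h') hP
  have hSB : ∑ f : G.Dart, (if f = e'.symm then
      (if f.toProd.2 = e.toProd.1 then q e else 0) else 0) =
      if e.toProd.1 = e'.toProd.1 then q e else 0 := by
    rw [Finset.sum_ite_eq' Finset.univ e'.symm
      (fun f => if f.toProd.2 = e.toProd.1 then q e else 0)]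
    simp [eq_comm]
  have hSC : ∑ f : G.Dart, (if f = e.symm then
      (if f.toProd.2 = e'.toProd.1 then star (q e') else 0) else 0) =
      if e.toProd.1 = e'.toProd.1 then star (q e') else 0 := by
    rw [Finset.sum_ite_eq' Finset.univ e.symm
      (fun f => if f.toProd.2 = e'.toProd.1 then star (q e') else 0)]
    simp
  have hSD : ∑ f : G.Dart, (if f = e.symm then (if f = e'.symm then (1 : Quaternion ℝ) else 0) else 0) =
      if e = e' then 1 else 0 := by
    rw [Finset.sum_ite_eq' Finset.univ e.symm (fun f => if f = e'.symm then (1 : Quaternion ℝ) else 0)]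
    simp [symm_eq_symm_iff]
  rw [hSA, hSB, hSC, hSD]
  by_cases hP : e.toProd.1 = e'.toProd.1 <;> simp [hP] <;> noncomm_ring

lemma starMul_apply (q : G.Dart → Quaternion ℝ) (f f' : G.Dart) :
    (star (quatTransition G q) * quatTransition G q) f f' =
      (if f.toProd.2 = f'.toProd.2 then
          (∑ e ∈ ({e : G.Dart | e.toProd.1 = f.toProd.2} : Finset _), star (q e) * q e)
            - star (q f'.symm) - q f.symm
        else 0) + (if f = f' then 1 else 0) := by
  rw [Matrix.mul_apply]
  have hterm : ∀ e : G.Dart,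
      star (quatTransition G q) f e * quatTransition G q e f' =
        ((if f.toProd.2 = e.toProd.1 then star (q e) else 0) *
            (if f'.toProd.2 = e.toProd.1 then q e else 0)
         - (if f' = e.symm then (if f.toProd.2 = e.toProd.1 then star (q e) else 0) else 0))
        - ((if f = e.symm then (if f'.toProd.2 = e.toProd.1 then q e else 0) else 0)
         - (if f = e.symm then (if f' = e.symm then 1 else 0) else 0)) := by
    intro e
    rw [Matrix.star_apply, qt_eq, qt_eq]
    simp only [star_sub, apply_ite star, star_zero, star_one]
    by_cases h1 : f = e.symm <;> by_cases h2 : f' = e.symm <;>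
      by_cases h3 : f.toProd.2 = e.toProd.1 <;> by_cases h4 : f'.toProd.2 = e.toProd.1 <;>
      simp_all <;> noncomm_ring
  rw [Finset.sum_congr rfl fun e _ => hterm e]
  rw [Finset.sum_sub_distrib, Finset.sum_sub_distrib, Finset.sum_sub_distrib]
  have hT1 : ∑ e : G.Dart, (if f.toProd.2 = e.toProd.1 then star (q e) else 0) *
      (if f'.toProd.2 = e.toProd.1 then q e else 0) =
      if f.toProd.2 = f'.toProd.2 then
        ∑ e ∈ ({e : G.Dart | e.toProd.1 = f.toProd.2} : Finset _), star (q e) * q e else 0 := by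
    by_cases hP : f.toProd.2 = f'.toProd.2
    · rw [if_pos hP]
      have : ∀ e : G.Dart, (if f.toProd.2 = e.toProd.1 then star (q e) else 0) *
          (if f'.toProd.2 = e.toProd.1 then q e else 0) =
          if e.toProd.1 = f.toProd.2 then star (q e) * q e else 0 := by
        intro e
        by_cases h : f.toProd.2 = e.toProd.1
        · rw [if_pos h, if_pos (hP ▸ h), if_pos h.symm]
        · rw [if_neg h, zero_mul, if_neg fun hh => h hh.symm]
      rw [Finset.sum_congr rfl fun e _ => this e, ← Finset.sum_filter]
    · rw [if_neg hP]
      apply Finset.sum_eq_zero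
      intro e _
      by_cases h : f.toProd.2 = e.toProd.1 <;> simp [h]
      intro h'
      exact absurd (h.trans h'.symm) hP
  have hT2 : ∑ e : G.Dart, (if f' = e.symm then
      (if f.toProd.2 = e.toProd.1 then star (q e) else 0) else 0) =
      if f.toProd.2 = f'.toProd.2 then star (q f'.symm) else 0 := by
    rw [Finset.sum_congr rfl fun e _ =>
      if_congr (eq_symm_comm e f') rfl rfl]
    rw [Finset.sum_ite_eq' Finset.univ f'.symm
      (fun e => if f.toProd.2 = e.toProd.1 then star (q e) else 0)]
    simp
  have hT3 : ∑ e : G.Dart, (if f = e.symm then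
      (if f'.toProd.2 = e.toProd.1 then q e else 0) else 0) =
      if f.toProd.2 = f'.toProd.2 then q f.symm else 0 := by
    rw [Finset.sum_congr rfl fun e _ =>
      if_congr (eq_symm_comm e f) rfl rfl]
    rw [Finset.sum_ite_eq' Finset.univ f.symm
      (fun e => if f'.toProd.2 = e.toProd.1 then q e else 0)]
    simp [eq_comm]
  have hT4 : ∑ e : G.Dart, (if f = e.symm then (if f' = e.symm then (1 : Quaternion ℝ) else 0) else 0) =
      if f = f' then 1 else 0 := by
    rw [Finset.sum_congr rfl fun e _ =>
      if_congr (eq_symm_comm e f) (if_congr (eq_symm_comm e f') rfl rfl) rfl]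
    rw [Finset.sum_ite_eq' Finset.univ f.symm (fun e => if e = f'.symm then (1 : Quaternion ℝ) else 0)]
    simp [symm_eq_symm_iff]
  rw [hT1, hT2, hT3, hT4]
  by_cases hP : f.toProd.2 = f'.toProd.2 <;> simp [hP] <;> noncomm_ring

end QuatTransitionAux

open QuatTransitionAux in
/-- Konno–Mitsuhashi–Sato: the quaternionic transition matrix U is
quaternionic unitary iff `q₀(e)² + q₁(e)² + q₂(e)² + q₃(e)² − 2q₀(e)/d_{o(e)} = 0` for
every arc e, and `q(e) = q(f)` whenever `o(e) = o(f)`. -/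
theorem quatTransition_unitary_iff [Fintype V] [DecidableEq V] (G : SimpleGraph V)
    [DecidableRel G.Adj] (hG : G.Connected) (q : G.Dart → Quaternion ℝ) :
    (star (quatTransition G q) * quatTransition G q = 1 ∧
     quatTransition G q * star (quatTransition G q) = 1) ↔
    ((∀ e : G.Dart,
        (q e).re ^ 2 + (q e).imI ^ 2 + (q e).imJ ^ 2 + (q e).imK ^ 2 -
          2 * (q e).re / (G.degree e.toProd.1 : ℝ) = 0) ∧
     (∀ e f : G.Dart, e.toProd.1 = f.toProd.1 → q e = q f)) := by
  have hdeg : ∀ e : G.Dart, (G.degree e.toProd.1 : ℝ) ≠ 0 := by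
    intro e
    have : 0 < G.degree e.toProd.1 := (G.degree_pos_iff_exists_adj _).mpr ⟨e.toProd.2, e.adj⟩
    exact_mod_cast this.ne'
  have hns : ∀ a : Quaternion ℝ,
      Quaternion.normSq a = a.re ^ 2 + a.imI ^ 2 + a.imJ ^ 2 + a.imK ^ 2 :=
    fun a => Quaternion.normSq_def' a
  constructor
  · rintro ⟨h1, h2⟩
    have hconst : ∀ e f : G.Dart, e.toProd.1 = f.toProd.1 → q e = q f := by
      intro e f hef
      have HA := congrFun (congrFun h1 e.symm) f.symm
      have HB := congrFun (congrFun h1 e.symm) e.symm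
      rw [starMul_apply, if_pos (show e.symm.toProd.2 = f.symm.toProd.2 by simp [hef]),
        Matrix.one_apply] at HA
      rw [starMul_apply, if_pos rfl, Matrix.one_apply] at HB
      have HA' := add_eq_right.mp HA
      have HB' := add_eq_right.mp HB
      simp only [SimpleGraph.Dart.symm_symm] at HA' HB'
      have h4 := HA'.trans HB'.symm
      have h5 : star (q f) = star (q e) := sub_right_inj.mp (sub_left_inj.mp h4)
      exact (star_injective h5).symm
    refine ⟨?_, hconst⟩
    intro e
    have HC := congrFun (congrFun h2 e) e
    rw [mulStar_apply, if_pos rfl, if_pos rfl, Matrix.one_apply_eq] at HC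
    have HC0 := add_eq_right.mp HC
    rw [sub_sub, Quaternion.self_mul_star, Quaternion.self_add_star'] at HC0
    rw [← Quaternion.coe_natCast, ← Quaternion.coe_mul, ← Quaternion.coe_sub] at HC0
    have HR : (G.degree e.toProd.1 : ℝ) * Quaternion.normSq (q e) - 2 * (q e).re = 0 :=
      Quaternion.coe_injective (HC0.trans Quaternion.coe_zero.symm)
    rw [sub_eq_zero, ← hns, eq_div_iff (hdeg e)]
    linear_combination HR
  · rintro ⟨h1, h2⟩
    have hkey : ∀ e : G.Dart,
        (G.degree e.toProd.1 : ℝ) * Quaternion.normSq (q e) = 2 * (q e).re := by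
      intro e
      have h := h1 e
      rw [sub_eq_zero, ← hns] at h
      rw [h]
      field_simp
      exact mul_div_cancel_left₀ _ (hdeg e)
    have hkeyQ : ∀ e : G.Dart, (G.degree e.toProd.1 : Quaternion ℝ) *
        ((Quaternion.normSq (q e) : ℝ) : Quaternion ℝ) =
        ((2 * (q e).re : ℝ) : Quaternion ℝ) := by
      intro e
      rw [← Quaternion.coe_natCast, ← Quaternion.coe_mul, hkey e]
    constructor
    · refine Matrix.ext fun f f' => ?_
      rw [starMul_apply, Matrix.one_apply]
      by_cases hP : f.toProd.2 = f'.toProd.2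
      · rw [if_pos hP]
        have hfs : f.symm.toProd.1 = f.toProd.2 := by simp
        have hsum : (∑ x ∈ ({x : G.Dart | x.toProd.1 = f.toProd.2} : Finset _),
            star (q x) * q x) =
            (G.degree f.toProd.2 : Quaternion ℝ) * (star (q f.symm) * q f.symm) := by
          rw [Finset.sum_congr rfl fun x hx => by
            rw [h2 x f.symm ((Finset.mem_filter.mp hx).2.trans hfs.symm)]]
          rw [Finset.sum_const, fst_fiber_card, nsmul_eq_mul]
        rw [hsum, h2 f'.symm f.symm (by simp [hP]), Quaternion.star_mul_self]
        have hk := hkeyQ f.symm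
        rw [hfs] at hk
        rw [hk, ← Quaternion.star_add_self']
        rw [show star (q f.symm) + q f.symm - star (q f.symm) - q f.symm = 0 from by abel,
          zero_add]
      · rw [if_neg hP, zero_add]
    · refine Matrix.ext fun e e' => ?_
      rw [mulStar_apply, Matrix.one_apply]
      by_cases hP : e.toProd.1 = e'.toProd.1
      · rw [if_pos hP, h2 e' e hP.symm, Quaternion.self_mul_star, hkeyQ e,
          ← Quaternion.self_add_star']
        rw [show q e + star (q e) - q e - star (q e) = 0 from by abel, zero_add]
      · rw [if_neg hP, zero_add]
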